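/- Let k ≥ 1, let F(u,T) = Σ_{i=0}^k a_i(u) T^i ∈ F_q[u,T] be separable of degree k in T, and let c₁ ≥ 0 ≥ c₂ be reals with deg a_i ≤ c₁ + c₂ i for all i. For r ∈ F_q[u] set F_{[r]}(u,T) = ∂F/∂u + (dr/du)·∂F/∂T. Then the resultant in T satisfies deg_u R(F, F_{[r]}) ≤ 2k c₁ + k·max(0, c₂ + deg r) - k + c₂ k². -/

import Mathlib

/-- The Sylvester matrix of `f` and `g`, with respect to the formal degrees `m` and `n`
(universal formula for `deg f ≤ m`, `deg g ≤ n`): `n` shifted rows of coefficients of `f`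
followed by `m` shifted rows of coefficients of `g`. -/
noncomputable def sylvester {R : Type*} [CommRing R] (m n : ℕ) (f g : Polynomial R) :
    Matrix (Fin (m + n)) (Fin (m + n)) R :=
  Matrix.of fun i j =>
    if (i : ℕ) < n then
      if (i : ℕ) ≤ (j : ℕ) ∧ (j : ℕ) ≤ m + (i : ℕ) then f.coeff (m + (i : ℕ) - (j : ℕ))
      else 0
    else
      if (i : ℕ) - n ≤ (j : ℕ) ∧ (j : ℕ) ≤ n + ((i : ℕ) - n) then
        g.coeff (n + ((i : ℕ) - n) - (j : ℕ))
      else 0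

/-- The resultant `R_{m,n}(f,g)`, defined by the universal (Sylvester determinant)
formula for polynomials of degrees at most `m` and `n`. -/
noncomputable def resultantAux {R : Type*} [CommRing R] (m n : ℕ) (f g : Polynomial R) : R :=
  (sylvester m n f g).det

/-- For `F(u,T) = Σᵢ aᵢ(u) Tⁱ`, the partial derivative `∂F/∂u` (derivative of the
coefficients). -/
noncomputable def coeffDeriv {F : Type*} [Field F] (P : Polynomial (Polynomial F)) :
    Polynomial (Polynomial F) :=
  P.sum fun i a => Polynomial.C (Polynomial.derivative a) * Polynomial.X ^ i

/-- `F_{[r]} = ∂F/∂u + (dr/du)·∂F/∂T`. -/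
noncomputable def Fbracket {F : Type*} [Field F] (P : Polynomial (Polynomial F))
    (r : Polynomial F) : Polynomial (Polynomial F) :=
  coeffDeriv P + Polynomial.C (Polynomial.derivative r) * Polynomial.derivative P

open Polynomial Finset

private lemma natDegree_sum_bound {R : Type*} [Semiring R] {ι : Type*} (s : Finset ι)
    (f : ι → Polynomial R) (B : ℝ)
    (h : ∀ i ∈ s, f i = 0 ∨ ((f i).natDegree : ℝ) ≤ B) :
    (∑ i ∈ s, f i) = 0 ∨ ((∑ i ∈ s, f i).natDegree : ℝ) ≤ B := by
  classical
  induction s using Finset.cons_induction with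
  | empty => exact Or.inl rfl
  | cons a s ha ih =>
    rw [Finset.sum_cons]
    rcases h a (Finset.mem_cons_self a s) with h0 | hB
    · rw [h0, zero_add]; exact ih fun i hi => h i (Finset.mem_cons_of_mem hi)
    · rcases ih (fun i hi => h i (Finset.mem_cons_of_mem hi)) with h0 | hB'
      · rw [h0, add_zero]; exact Or.inr hB
      · refine Or.inr (le_trans ?_ (max_le hB hB'))
        have h2 := Polynomial.natDegree_add_le (f a) (∑ i ∈ s, f i)
        calc ((f a + ∑ i ∈ s, f i).natDegree : ℝ)
            ≤ ((max (f a).natDegree (∑ i ∈ s, f i).natDegree : ℕ) : ℝ) := by exact_mod_cast h2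
          _ = max ((f a).natDegree : ℝ) ((∑ i ∈ s, f i).natDegree : ℝ) := by
              push_cast [Nat.cast_max]; rfl

private lemma natDegree_prod_bound {R : Type*} [CommSemiring R] {ι : Type*} (s : Finset ι)
    (f : ι → Polynomial R) (B : ι → ℝ)
    (h : ∀ i ∈ s, f i = 0 ∨ ((f i).natDegree : ℝ) ≤ B i) :
    (∏ i ∈ s, f i) = 0 ∨ ((∏ i ∈ s, f i).natDegree : ℝ) ≤ ∑ i ∈ s, B i := by
  classical
  induction s using Finset.cons_induction with
  | empty => simp
  | cons a s ha ih =>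
    rw [Finset.prod_cons, Finset.sum_cons]
    rcases h a (Finset.mem_cons_self a s) with h0 | hB
    · rw [h0, zero_mul]; exact Or.inl rfl
    rcases ih (fun i hi => h i (Finset.mem_cons_of_mem hi)) with h0 | hB'
    · rw [h0, mul_zero]; exact Or.inl rfl
    refine Or.inr ?_
    have h2 := Polynomial.natDegree_mul_le (p := f a) (q := ∏ i ∈ s, f i)
    calc ((f a * ∏ i ∈ s, f i).natDegree : ℝ)
        ≤ ((f a).natDegree : ℝ) + ((∏ i ∈ s, f i).natDegree : ℝ) := by exact_mod_cast h2
      _ ≤ B a + ∑ i ∈ s, B i := add_le_add hB hB'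

private lemma coeffDeriv_coeff {F : Type*} [Field F] (P : Polynomial (Polynomial F)) (t : ℕ) :
    (coeffDeriv P).coeff t = Polynomial.derivative (P.coeff t) := by
  classical
  unfold coeffDeriv
  rw [Polynomial.sum_def, Polynomial.finset_sum_coeff]
  simp only [Polynomial.coeff_C_mul, Polynomial.coeff_X_pow, mul_ite, mul_one, mul_zero]
  rw [Finset.sum_ite_eq P.support t (fun i => Polynomial.derivative (P.coeff i))]
  split_ifs with h
  · rfl
  · rw [Polynomial.notMem_support_iff.mp h, map_zero]

private lemma Fbracket_coeff {F : Type*} [Field F] (P : Polynomial (Polynomial F))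
    (r : Polynomial F) (t : ℕ) :
    (Fbracket P r).coeff t = Polynomial.derivative (P.coeff t)
      + Polynomial.derivative r * (P.coeff (t + 1) * ((t : Polynomial F) + 1)) := by
  rw [Fbracket, Polynomial.coeff_add, coeffDeriv_coeff, Polynomial.coeff_C_mul,
    Polynomial.coeff_derivative]

/-- If the derivative of `p` is nonzero, then `1 ≤ natDegree p` and
`(natDegree (derivative p) : ℝ) ≤ natDegree p - 1`. -/
private lemma deriv_deg {R : Type*} [CommSemiring R] {p : Polynomial R}
    (h : Polynomial.derivative p ≠ 0) :
    1 ≤ p.natDegree ∧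
      ((Polynomial.derivative p).natDegree : ℝ) ≤ (p.natDegree : ℝ) - 1 := by
  have h1 : 1 ≤ p.natDegree := by
    by_contra hc
    push_neg at hc
    interval_cases hdeg : p.natDegree
    · obtain ⟨c, hc⟩ := Polynomial.natDegree_eq_zero.mp hdeg
      exact h (by rw [← hc, Polynomial.derivative_C])
  refine ⟨h1, ?_⟩
  have h2 := Polynomial.natDegree_derivative_le p
  have : ((Polynomial.derivative p).natDegree : ℝ) ≤ ((p.natDegree - 1 : ℕ) : ℝ) := by
    exact_mod_cast h2
  rwa [Nat.cast_sub h1, Nat.cast_one] at this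

/-- Let `F(u,T) = Σ_{i=0}^k aᵢ(u) Tⁱ ∈ F_q[u,T]` be separable of degree `k ≥ 1` in `T`,
and let `c₁ ≥ 0 ≥ c₂` be reals with `deg aᵢ ≤ c₁ + c₂ i` for all `i`.  Then for any
`r ∈ F_q[u]`, the resultant in `T` satisfies
`deg_u R(F, F_{[r]}) ≤ 2k c₁ + k·max(0, c₂ + deg r) - k + c₂ k²`. -/
theorem resultant_degree_bound (F : Type*) [Field F] [Fintype F]
    (k : ℕ) (hk : 1 ≤ k) (P : Polynomial (Polynomial F)) (hdegT : P.natDegree = k)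
    (hsep : (P.map (algebraMap (Polynomial F) (FractionRing (Polynomial F)))).Separable)
    (c₁ c₂ : ℝ) (hc₁ : 0 ≤ c₁) (hc₂ : c₂ ≤ 0)
    (hcoeff : ∀ i ≤ k, P.coeff i = 0 ∨ ((P.coeff i).natDegree : ℝ) ≤ c₁ + c₂ * i)
    (r : Polynomial F) :
    resultantAux P.natDegree (Fbracket P r).natDegree P (Fbracket P r) = 0 ∨
      ((resultantAux P.natDegree (Fbracket P r).natDegree P (Fbracket P r)).natDegree : ℝ) ≤
        2 * k * c₁ + k * max 0 (c₂ + (r.natDegree : ℝ)) - k + c₂ * k ^ 2 := by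
  classical
  have hP0 : P ≠ 0 := by
    intro h
    rw [h, Polynomial.natDegree_zero] at hdegT
    omega
  have hlead : P.coeff k ≠ 0 := by
    rw [← hdegT]
    exact Polynomial.leadingCoeff_ne_zero.mpr hP0
  have hck : 0 ≤ c₁ + c₂ * k := by
    rcases hcoeff k le_rfl with h | h
    · exact absurd h hlead
    · exact le_trans (Nat.cast_nonneg _) h
  set G := Fbracket P r with hGdef
  set m := P.natDegree with hmdef
  set n := G.natDegree with hndef
  set M : ℝ := max 0 (c₂ + (r.natDegree : ℝ)) with hMdef
  have hM0 : 0 ≤ M := le_max_left _ _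
  -- bound on the coefficients of G = Fbracket P r
  have hb : ∀ t ≤ k, G.coeff t = 0 ∨ ((G.coeff t).natDegree : ℝ) ≤ M + c₁ - 1 + c₂ * t := by
    intro t ht
    rw [hGdef, Fbracket_coeff]
    set s₁ := Polynomial.derivative (P.coeff t) with hs₁
    set s₂ := Polynomial.derivative r * (P.coeff (t + 1) * ((t : Polynomial F) + 1)) with hs₂
    have h₁ : s₁ = 0 ∨ ((s₁ : Polynomial F).natDegree : ℝ) ≤ M + c₁ - 1 + c₂ * t := by
      by_cases hz : s₁ = 0
      · exact Or.inl hz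
      right
      obtain ⟨hd1, hd2⟩ := deriv_deg hz
      have hne : P.coeff t ≠ 0 := by
        intro h; exact hz (by rw [hs₁, h, map_zero])
      have hct := (hcoeff t ht).resolve_left hne
      calc ((s₁ : Polynomial F).natDegree : ℝ) ≤ ((P.coeff t).natDegree : ℝ) - 1 := hd2
        _ ≤ c₁ + c₂ * t - 1 := by linarith
        _ ≤ M + c₁ - 1 + c₂ * t := by linarith
    have h₂ : s₂ = 0 ∨ ((s₂ : Polynomial F).natDegree : ℝ) ≤ M + c₁ - 1 + c₂ * t := by
      by_cases hz : s₂ = 0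
      · exact Or.inl hz
      right
      have hr0 : Polynomial.derivative r ≠ 0 := by
        intro h; exact hz (by rw [hs₂, h, zero_mul])
      have hP1 : P.coeff (t + 1) ≠ 0 := by
        intro h; exact hz (by rw [hs₂, h, zero_mul, mul_zero])
      have htk : t + 1 ≤ k := by
        by_contra hc
        push_neg at hc
        exact hP1 (Polynomial.coeff_eq_zero_of_natDegree_lt (by omega))
      obtain ⟨hr1, hr2⟩ := deriv_deg hr0
      have hct := (hcoeff (t + 1) htk).resolve_left hP1
      have hmul : (s₂ : Polynomial F).natDegree ≤
          (Polynomial.derivative r).natDegree + ((P.coeff (t + 1)).natDegree +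
            ((t : Polynomial F) + 1).natDegree) := by
        rw [hs₂]
        exact le_trans Polynomial.natDegree_mul_le
          (Nat.add_le_add_left Polynomial.natDegree_mul_le _)
      have hnat : ((t : Polynomial F) + 1).natDegree = 0 := by
        have h5 : ((t : Polynomial F) + 1) = ((t + 1 : ℕ) : Polynomial F) := by push_cast; ring
        rw [h5, Polynomial.natDegree_natCast]
      rw [hnat, add_zero] at hmul
      have hMr : c₂ + (r.natDegree : ℝ) ≤ M := le_max_right _ _
      have h6 : ((s₂ : Polynomial F).natDegree : ℝ) ≤
          ((Polynomial.derivative r).natDegree : ℝ) + ((P.coeff (t + 1)).natDegree : ℝ) := by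
        exact_mod_cast hmul
      have hcast : ((t + 1 : ℕ) : ℝ) = (t : ℝ) + 1 := by push_cast; ring
      rw [hcast] at hct
      calc ((s₂ : Polynomial F).natDegree : ℝ)
          ≤ ((Polynomial.derivative r).natDegree : ℝ) + ((P.coeff (t + 1)).natDegree : ℝ) := h6
        _ ≤ ((r.natDegree : ℝ) - 1) + (c₁ + c₂ * ((t : ℝ) + 1)) := add_le_add hr2 hct
        _ = (c₂ + (r.natDegree : ℝ)) + c₁ - 1 + c₂ * t := by ring
        _ ≤ M + c₁ - 1 + c₂ * t := by linarith
    rcases h₁ with h₁ | h₁ <;> rcases h₂ with h₂ | h₂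
    · exact Or.inl (by rw [h₁, h₂, add_zero])
    · rw [h₁, zero_add]; exact Or.inr h₂
    · rw [h₂, add_zero]; exact Or.inr h₁
    · refine Or.inr ?_
      have h2 := Polynomial.natDegree_add_le s₁ s₂
      have h7 : ((s₁ + s₂).natDegree : ℝ) ≤
          max ((s₁ : Polynomial F).natDegree : ℝ) ((s₂ : Polynomial F).natDegree : ℝ) := by
        have h8 := Nat.cast_le (α := ℝ) |>.mpr h2
        rwa [Nat.cast_max] at h8
      exact le_trans h7 (max_le h₁ h₂)
  -- n ≤ k
  have hnk : n ≤ k := by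
    rw [hndef, hGdef]
    apply Polynomial.natDegree_le_iff_coeff_eq_zero.mpr
    intro N hN
    have hmk : P.natDegree = k := hdegT
    rw [Fbracket_coeff, Polynomial.coeff_eq_zero_of_natDegree_lt (by omega : P.natDegree < N),
      Polynomial.coeff_eq_zero_of_natDegree_lt (by omega : P.natDegree < N + 1)]
    simp
  -- row weight function
  set v : ℕ → ℝ := fun x =>
    if x < n then c₁ + c₂ * ((m : ℝ) + x) else (M + c₁ - 1) + c₂ * x with hvdef
  -- entry bound
  have hentry : ∀ i j : Fin (m + n), sylvester m n P G i j = 0 ∨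
      ((sylvester m n P G i j).natDegree : ℝ) ≤ v (i : ℕ) - c₂ * ((j : ℕ) : ℝ) := by
    intro i j
    unfold _root_.sylvester
    simp only [Matrix.of_apply]
    split_ifs with h1 h2 h3
    · -- f row
      rcases hcoeff (m + (i : ℕ) - (j : ℕ)) (by omega) with h | h
      · exact Or.inl h
      · refine Or.inr ?_
        have hc : ((m + (i : ℕ) - (j : ℕ) : ℕ) : ℝ) = (m : ℝ) + ((i : ℕ) : ℝ) - ((j : ℕ) : ℝ) := by
          rw [Nat.cast_sub h2.2]; push_cast; ring
        rw [hc] at h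
        have hv : v (i : ℕ) = c₁ + c₂ * ((m : ℝ) + ((i : ℕ) : ℝ)) := by
          simp only [hvdef]; rw [if_pos h1]
        rw [hv]
        linarith
    · exact Or.inl rfl
    · -- g row
      have hni : n ≤ (i : ℕ) := by omega
      have hidx : n + ((i : ℕ) - n) - (j : ℕ) = (i : ℕ) - (j : ℕ) := by omega
      rw [hidx]
      rcases hb ((i : ℕ) - (j : ℕ)) (by omega) with h | h
      · exact Or.inl h
      · refine Or.inr ?_
        have hji : (j : ℕ) ≤ (i : ℕ) := by omega
        have hc : (((i : ℕ) - (j : ℕ) : ℕ) : ℝ) = ((i : ℕ) : ℝ) - ((j : ℕ) : ℝ) :=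
          Nat.cast_sub hji
        rw [hc] at h
        have hv : v (i : ℕ) = (M + c₁ - 1) + c₂ * ((i : ℕ) : ℝ) := by
          simp only [hvdef]; rw [if_neg h1]
        rw [hv]
        linarith
    · exact Or.inl rfl
  -- value of the weight sum
  have hsum : ∑ x ∈ Finset.range (m + n), v x - c₂ * ∑ x ∈ Finset.range (m + n), (x : ℝ) =
      n * c₁ + m * (M + c₁ - 1) + c₂ * (m * n) := by
    have hIco : ∀ f : ℕ → ℝ, ∑ x ∈ Finset.range (m + n), f x =
        ∑ x ∈ Finset.Ico 0 n, f x + ∑ x ∈ Finset.Ico n (m + n), f x := by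
      intro f
      rw [Finset.range_eq_Ico, ← Finset.sum_Ico_consecutive f (Nat.zero_le n) (by omega)]
    rw [hIco v, hIco (fun x => (x : ℝ))]
    have e1 : ∑ x ∈ Finset.Ico 0 n, v x =
        n * (c₁ + c₂ * m) + c₂ * ∑ x ∈ Finset.Ico 0 n, (x : ℝ) := by
      calc ∑ x ∈ Finset.Ico 0 n, v x
          = ∑ x ∈ Finset.Ico 0 n, ((c₁ + c₂ * (m : ℝ)) + c₂ * (x : ℝ)) := by
            refine Finset.sum_congr rfl fun x hx => ?_
            simp only [Finset.mem_Ico] at hx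
            simp only [hvdef]
            rw [if_pos hx.2]
            ring
        _ = (Finset.Ico 0 n).card • (c₁ + c₂ * (m : ℝ)) + c₂ * ∑ x ∈ Finset.Ico 0 n, (x : ℝ) := by
            rw [Finset.sum_add_distrib, Finset.sum_const, Finset.mul_sum]
        _ = n * (c₁ + c₂ * m) + c₂ * ∑ x ∈ Finset.Ico 0 n, (x : ℝ) := by
            rw [Nat.card_Ico, Nat.sub_zero, nsmul_eq_mul]
    have e2 : ∑ x ∈ Finset.Ico n (m + n), v x =
        m * (M + c₁ - 1) + c₂ * ∑ x ∈ Finset.Ico n (m + n), (x : ℝ) := by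
      calc ∑ x ∈ Finset.Ico n (m + n), v x
          = ∑ x ∈ Finset.Ico n (m + n), ((M + c₁ - 1) + c₂ * (x : ℝ)) := by
            refine Finset.sum_congr rfl fun x hx => ?_
            simp only [Finset.mem_Ico] at hx
            simp only [hvdef]
            rw [if_neg (by omega)]
        _ = (Finset.Ico n (m + n)).card • (M + c₁ - 1) + c₂ * ∑ x ∈ Finset.Ico n (m + n), (x : ℝ) := by
            rw [Finset.sum_add_distrib, Finset.sum_const, Finset.mul_sum]
        _ = m * (M + c₁ - 1) + c₂ * ∑ x ∈ Finset.Ico n (m + n), (x : ℝ) := by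
            rw [Nat.card_Ico, Nat.add_sub_cancel, nsmul_eq_mul]
    rw [e1, e2]
    ring
  -- final numeric inequality
  have hfinal : (n : ℝ) * c₁ + m * (M + c₁ - 1) + c₂ * (m * n) ≤
      2 * k * c₁ + k * M - k + c₂ * k ^ 2 := by
    have hnk' : (n : ℝ) ≤ k := by exact_mod_cast hnk
    have hm' : (m : ℝ) = k := by exact_mod_cast hdegT
    rw [hm']
    nlinarith [mul_nonneg (sub_nonneg.mpr hnk') hck]
  -- assemble
  unfold resultantAux
  rw [Matrix.det_apply]
  refine natDegree_sum_bound _ _ _ ?_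
  intro σ _
  have hprod := natDegree_prod_bound Finset.univ (fun i => sylvester m n P G (σ i) i)
      (fun i => v ((σ i : Fin (m + n)) : ℕ) - c₂ * ((i : ℕ) : ℝ)) (fun i _ => hentry (σ i) i)
  have hsum2 : ∑ i : Fin (m + n), (v ((σ i : Fin (m + n)) : ℕ) - c₂ * ((i : ℕ) : ℝ)) =
      n * c₁ + m * (M + c₁ - 1) + c₂ * (m * n) := by
    rw [Finset.sum_sub_distrib, ← Finset.mul_sum]
    have hA : ∑ i : Fin (m + n), v ((σ i : Fin (m + n)) : ℕ) =
        ∑ x ∈ Finset.range (m + n), v x := by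
      rw [Equiv.sum_comp σ (fun i : Fin (m + n) => v (i : ℕ))]
      exact Fin.sum_univ_eq_sum_range v (m + n)
    have hB : ∑ i : Fin (m + n), ((i : ℕ) : ℝ) = ∑ x ∈ Finset.range (m + n), (x : ℝ) :=
      Fin.sum_univ_eq_sum_range _ (m + n)
    rw [hA, hB, hsum]
  rw [hsum2] at hprod
  rcases Int.units_eq_one_or (Equiv.Perm.sign σ) with hs | hs <;> rw [hs]
  · rw [one_smul]
    exact hprod.imp id fun h => le_trans h hfinal
  · rw [Units.smul_def, Units.val_neg, Units.val_one, neg_one_zsmul]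
    rcases hprod with h | h
    · exact Or.inl (by rw [h, neg_zero])
    · exact Or.inr (by rw [Polynomial.natDegree_neg]; exact le_trans h hfinal)
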